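/- arXiv:1110.1199 — 2 statements merged into one kernel-verified Lean document; each statement's English description precedes it below -/
import Mathlib

section
/- Let R be an integral domain that admits a group isomorphism φ: Frac(R)^×/R^× → ℤ^{(I)} such that g ≤ h (i.e., hg^{-1} ∈ R) if and only if φ(g) ≤ φ(h) componentwise. Then R is a unique factorization domain. -/
section Aux

/-- Sum of a nonnegative finsupp is nonnegative. -/
lemma aux_sum_nonneg {I : Type v} (c : I →₀ ℤ) (hc : 0 ≤ c) :
    0 ≤ c.sum fun _ n => n := by
  apply Finset.sum_nonneg
  intro i _
  exact Finsupp.le_def.mp hc i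

/-- Strict monotonicity of the sum on nonnegative finsupps. -/
lemma aux_sum_lt {I : Type v} (c d : I →₀ ℤ) (hc : 0 ≤ c) (hcd : c ≤ d) (hne : c ≠ d) :
    (c.sum fun _ n => n) < d.sum fun _ n => n := by
  have hd : d = c + (d - c) := by abel
  have hsum : (d.sum fun _ n => n) = (c.sum fun _ n => n) + ((d - c).sum fun _ n => n) := by
    conv_lhs => rw [hd]
    exact Finsupp.sum_add_index' (fun _ => rfl) (fun _ _ _ => rfl)
  have he0 : (0 : I →₀ ℤ) ≤ d - c := by simpa using hcd
  have hene : d - c ≠ 0 := sub_ne_zero.mpr (Ne.symm hne)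
  have hpos : 0 < (d - c).sum fun _ n => n := by
    obtain ⟨i, hi⟩ : ∃ i, (d - c) i ≠ 0 := by
      by_contra h
      push_neg at h
      exact hene (Finsupp.ext h)
    apply Finset.sum_pos'
    · intro j _
      exact Finsupp.le_def.mp he0 j
    · exact ⟨i, Finsupp.mem_support_iff.mpr hi,
        lt_of_le_of_ne (Finsupp.le_def.mp he0 i) (Ne.symm hi)⟩
  omega

end Aux

/-- If the divisibility group of an integral domain `R` is order-isomorphic to
`ℤ^{(I)}`, then `R` is a unique factorization domain. -/
theorem stmt_8 {R : Type u} [CommRing R] [IsDomain R] (I : Type v)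
    (φ : (FractionRing R)ˣ ⧸
        (Units.map (algebraMap R (FractionRing R)).toMonoidHom).range ≃*
        Multiplicative (I →₀ ℤ))
    (hφ : ∀ g h : (FractionRing R)ˣ,
      ((∃ r : R, algebraMap R (FractionRing R) r = ((h * g⁻¹ : _ˣ) : FractionRing R)) ↔
        Multiplicative.toAdd (φ (QuotientGroup.mk g)) ≤
          Multiplicative.toAdd (φ (QuotientGroup.mk h)))) :
    UniqueFactorizationMonoid R := by
  classical
  have hinj : Function.Injective (algebraMap R (FractionRing R)) :=
    IsFractionRing.injective R (FractionRing R)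
  -- the "valuation" on units of the fraction field
  set w : (FractionRing R)ˣ → (I →₀ ℤ) :=
    fun g => Multiplicative.toAdd (φ (QuotientGroup.mk g)) with hw
  have wmul : ∀ g h : (FractionRing R)ˣ, w (g * h) = w g + w h := by
    intro g h
    simp only [hw]
    rw [← toAdd_mul, ← map_mul, ← QuotientGroup.mk_mul]
  have wone : w 1 = 0 := by
    simp only [hw]
    rw [QuotientGroup.mk_one, map_one]
    rfl
  -- embedding nonzero elements of R as units of the fraction field
  have hmapne : ∀ a : R, a ≠ 0 → algebraMap R (FractionRing R) a ≠ 0 := by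
    intro a ha h0
    exact ha (hinj (by simpa using h0))
  set u : R → (FractionRing R)ˣ := fun a =>
    if h : a = 0 then 1 else Units.mk0 (algebraMap R (FractionRing R) a) (hmapne a h)
    with hu
  have uval : ∀ a : R, a ≠ 0 → ((u a : (FractionRing R)ˣ) : FractionRing R)
      = algebraMap R (FractionRing R) a := by
    intro a ha
    simp [hu, ha]
  have umul : ∀ a b : R, a ≠ 0 → b ≠ 0 → u (a * b) = u a * u b := by
    intro a b ha hb
    apply Units.ext
    rw [Units.val_mul, uval _ (mul_ne_zero ha hb), uval _ ha, uval _ hb, map_mul]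
  have uone : u 1 = 1 := by
    apply Units.ext
    rw [uval 1 one_ne_zero, map_one, Units.val_one]
  -- the valuation on R
  set v : R → (I →₀ ℤ) := fun a => w (u a) with hv
  have vmul : ∀ a b : R, a ≠ 0 → b ≠ 0 → v (a * b) = v a + v b := by
    intro a b ha hb
    rw [hv]
    simp only
    rw [umul a b ha hb, wmul]
  have vone : v 1 = 0 := by rw [hv]; simp only; rw [uone, wone]
  -- divisibility criterion
  have hdvd : ∀ a b : R, a ≠ 0 → b ≠ 0 → (a ∣ b ↔ v a ≤ v b) := by
    intro a b ha hb
    rw [hv]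
    simp only
    rw [← hφ (u a) (u b)]
    constructor
    · rintro ⟨c, rfl⟩
      have hc : c ≠ 0 := fun h => hb (by simp [h])
      refine ⟨c, ?_⟩
      have : u (a * c) * (u a)⁻¹ = u c := by
        rw [umul a c ha hc, mul_comm (u a), mul_inv_cancel_right]
      rw [this, uval c hc]
    · rintro ⟨r, hr⟩
      have key : algebraMap R (FractionRing R) (r * a) = algebraMap R (FractionRing R) b := by
        rw [map_mul, hr, ← uval a ha, ← Units.val_mul, inv_mul_cancel_right, uval b hb]
      exact ⟨r, (hinj key).symm ▸ (mul_comm r a ▸ rfl)⟩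
  -- nonnegativity
  have hnonneg : ∀ a : R, a ≠ 0 → 0 ≤ v a := by
    intro a ha
    rw [← vone]
    exact (hdvd 1 a one_ne_zero ha).mp (one_dvd a)
  -- units have valuation zero and conversely
  have hunit : ∀ a : R, a ≠ 0 → (IsUnit a ↔ v a = 0) := by
    intro a ha
    constructor
    · intro h
      have h1 : a ∣ 1 := h.dvd
      have := (hdvd a 1 ha one_ne_zero).mp h1
      rw [vone] at this
      exact le_antisymm this (hnonneg a ha)
    · intro h
      have : a ∣ 1 := (hdvd a 1 ha one_ne_zero).mpr (by rw [h, vone])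
      exact isUnit_of_dvd_one this
  -- surjectivity: every nonnegative finsupp is the valuation of some nonzero element
  have hsurj : ∀ c : I →₀ ℤ, 0 ≤ c → ∃ a : R, a ≠ 0 ∧ v a = c := by
    intro c hc
    obtain ⟨g, hg⟩ := QuotientGroup.mk_surjective (φ.symm (Multiplicative.ofAdd c))
    have hwg : w g = c := by
      simp only [hw]
      rw [hg, MulEquiv.apply_symm_apply]
      rfl
    obtain ⟨r, hr⟩ : ∃ r : R,
        algebraMap R (FractionRing R) r = ((g * (1 : (FractionRing R)ˣ)⁻¹ : _ˣ) : FractionRing R) := by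
      rw [hφ 1 g]
      show w 1 ≤ w g
      rw [wone, hwg]
      exact hc
    rw [inv_one, mul_one] at hr
    have hrne : r ≠ 0 := by
      intro h0
      rw [h0, map_zero] at hr
      exact g.ne_zero hr.symm
    refine ⟨r, hrne, ?_⟩
    have : u r = g := Units.ext (by rw [uval r hrne, hr])
    rw [hv]
    simp only
    rw [this, hwg]
  -- well-founded divisibility
  have hwfd : WfDvdMonoid R := by
    constructor
    set μ : R → ℕ∞ := fun a =>
      if a = 0 then ⊤ else (((v a).sum fun _ n => n).toNat : ℕ∞) with hμ
    have hstep : ∀ a b : R, DvdNotUnit a b → μ a < μ b := by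
      rintro a b ⟨ha, x, hx, rfl⟩
      by_cases hb : a * x = 0
      · rw [hμ]
        simp only [hb, if_pos rfl, if_neg ha]
        exact WithTop.coe_lt_top _
      · have hxne : x ≠ 0 := fun h => hb (by rw [h, mul_zero])
        have hvab : v (a * x) = v a + v x := vmul a x ha hxne
        have hxnn : 0 ≤ v x := hnonneg x hxne
        have hxnz : v x ≠ 0 := fun h => hx ((hunit x hxne).mpr h)
        have hle : v a ≤ v (a * x) := by rw [hvab]; exact le_add_of_nonneg_right hxnn
        have hne : v a ≠ v (a * x) := by
          rw [hvab]
          intro h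
          exact hxnz (left_eq_add.mp h)
        have hlt := aux_sum_lt (v a) (v (a * x)) (hnonneg a ha) hle hne
        have h0a : 0 ≤ (v a).sum fun _ n => n := aux_sum_nonneg _ (hnonneg a ha)
        rw [hμ]
        simp only [if_neg ha, if_neg hb]
        exact_mod_cast (Int.toNat_lt_toNat (by omega)).mpr hlt
      
    exact Subrelation.wf (fun {a b} h => hstep a b h) (InvImage.wf μ wellFounded_lt)
  -- irreducibles are prime
  refine { hwfd with irreducible_iff_prime := ?_ }
  intro p
  constructor
  · intro hp
    have hp0 : p ≠ 0 := hp.ne_zero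
    have hpu : ¬ IsUnit p := hp.not_isUnit
    have hvp0 : v p ≠ 0 := fun h => hpu ((hunit p hp0).mpr h)
    have hvpnn : 0 ≤ v p := hnonneg p hp0
    -- v p is of the form single i 1
    obtain ⟨i, hi⟩ : ∃ i, v p i ≠ 0 := by
      by_contra h
      push_neg at h
      exact hvp0 (Finsupp.ext h)
    have hi1 : 1 ≤ v p i := by
      have : (0:ℤ) ≤ v p i := by simpa using Finsupp.le_def.mp hvpnn i
      omega
    have hsingle : v p = Finsupp.single i 1 := by
      have hc0 : (0 : I →₀ ℤ) ≤ Finsupp.single i 1 := by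
        rw [Finsupp.le_def]
        intro j
        by_cases hj : i = j <;> simp [hj, Finsupp.single_apply]
      have hcle : Finsupp.single i 1 ≤ v p := by
        rw [Finsupp.le_def]
        intro j
        by_cases hj : j = i
        · subst hj; simpa [Finsupp.single_apply] using hi1
        · have : (0:ℤ) ≤ v p j := by simpa using Finsupp.le_def.mp hvpnn j
          simp [Finsupp.single_apply, Ne.symm hj]
          omega
      obtain ⟨a, hane, hva⟩ := hsurj (Finsupp.single i 1) hc0
      have hadvd : a ∣ p := (hdvd a p hane hp0).mpr (hva ▸ hcle)
      obtain ⟨y, hy⟩ := hadvd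
      have hyne : y ≠ 0 := fun h => hp0 (by rw [hy, h, mul_zero])
      rcases hp.isUnit_or_isUnit hy with hua | huy
      · exfalso
        have : v a = 0 := (hunit a hane).mp hua
        rw [hva] at this
        exact one_ne_zero (Finsupp.single_eq_zero.mp this)
      · have hvy : v y = 0 := (hunit y hyne).mp huy
        rw [hy, vmul a y hane hyne, hvy, add_zero, hva]
    -- now prove primality
    refine ⟨hp0, hpu, ?_⟩
    intro a b hab
    by_cases ha : a = 0
    · left; rw [ha]; exact dvd_zero p
    by_cases hb : b = 0
    · right; rw [hb]; exact dvd_zero p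
    have habne : a * b ≠ 0 := mul_ne_zero ha hb
    have hle : v p ≤ v (a * b) := (hdvd p (a * b) hp0 habne).mp hab
    rw [vmul a b ha hb, hsingle] at hle
    have hi' : 1 ≤ v a i + v b i := by
      have := Finsupp.le_def.mp hle i
      simpa [Finsupp.single_apply] using this
    have hcase : 1 ≤ v a i ∨ 1 ≤ v b i := by omega
    rcases hcase with h | h
    · left
      apply (hdvd p a hp0 ha).mpr
      rw [hsingle, Finsupp.le_def]
      intro j
      by_cases hj : j = i
      · subst hj; simpa [Finsupp.single_apply] using h
      · have : (0:ℤ) ≤ v a j := by simpa using Finsupp.le_def.mp (hnonneg a ha) j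
        simp [Finsupp.single_apply, Ne.symm hj]
        omega
    · right
      apply (hdvd p b hp0 hb).mpr
      rw [hsingle, Finsupp.le_def]
      intro j
      by_cases hj : j = i
      · subst hj; simpa [Finsupp.single_apply] using h
      · have : (0:ℤ) ≤ v b j := by simpa using Finsupp.le_def.mp (hnonneg b hb) j
        simp [Finsupp.single_apply, Ne.symm hj]
        omega
  · exact Prime.irreducible
end

section
/- Let K be a field with x_1,...,x_m algebraically independent, x_0 := 1, and define y_i := (x_{i+1} + x_{i-1})/x_i for 1 ≤ i ≤ m−1 together with y_0 := x_1. If U = K[y_0, y_1, ..., y_{m-1}] ⊆ K(x_1,...,x_m) then each x_k (1 ≤ k ≤ m) belongs to U. -/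
/-- With `y₀ = x₁` and `y_j = (x_{j+1} + x_{j-1})/x_j` (`x₀ = 1`), every `x_k`
(`1 ≤ k ≤ m`) lies in the subalgebra `K[y₀, …, y_{m-1}]`. -/
theorem stmt_11 {K F : Type*} [Field K] [Field F] [Algebra K F]
    (m : ℕ) (hm : 2 ≤ m) (x : ℕ → F) (hx0 : x 0 = 1)
    (hx : AlgebraicIndependent K (fun i : Fin m => x (i.val + 1)))
    (y : ℕ → F) (hy0 : y 0 = x 1)
    (hy : ∀ j, 1 ≤ j → j ≤ m - 1 → y j = (x (j + 1) + x (j - 1)) / x j) :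
    ∀ k, 1 ≤ k → k ≤ m →
      x k ∈ Algebra.adjoin K (Set.range (fun i : Fin m => y i.val)) := by
  have hxne : ∀ j, 1 ≤ j → j ≤ m → x j ≠ 0 := by
    intro j h1 h2
    have := hx.ne_zero ⟨j - 1, by omega⟩
    simpa [Nat.sub_add_cancel h1] using this
  have hymem : ∀ j, j < m → y j ∈ Algebra.adjoin K (Set.range (fun i : Fin m => y i.val)) := by
    intro j hj
    exact Algebra.subset_adjoin ⟨⟨j, hj⟩, rfl⟩
  have key : ∀ k, k ≤ m → x k ∈ Algebra.adjoin K (Set.range (fun i : Fin m => y i.val)) := by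
    intro k
    induction k using Nat.strong_induction_on with
    | _ k ih =>
      intro hk
      match k with
      | 0 => rw [hx0]; exact one_mem _
      | 1 => rw [← hy0]; exact hymem 0 (by omega)
      | (j+2) =>
        have hj1 : 1 ≤ j + 1 := by omega
        have hjm : j + 1 ≤ m - 1 := by omega
        have hyj := hy (j+1) hj1 hjm
        have hne : x (j+1) ≠ 0 := hxne (j+1) (by omega) (by omega)
        have : x (j+2) = y (j+1) * x (j+1) - x j := by
          rw [hyj]
          field_simp
          rw [Nat.add_sub_cancel]; ring
        rw [this]
        exact sub_mem (mul_mem (hymem (j+1) (by omega)) (ih (j+1) (by omega) (by omega)))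
          (ih j (by omega) (by omega))
  intro k _ hk
  exact key k hk
end
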